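/- Let ε = ±1 and let ∇ be the Type B connection with C₂₂¹ = ε, C₁₂¹ = 0, C₂₂² = 2εC₁₁², C₁₁¹ = 1 + 2C₁₂² + ε(C₁₁²)², and set α = C₁₁¹ − C₁₂² − 1. Then f(x¹,x²) = (x¹)^α satisfies H(f) = −f ρ_s. -/
import Mathlib


open Real

/-- Partial derivative ∂_i on ℝ². -/
noncomputable def pd (i : Fin 2) (f : ℝ × ℝ → ℝ) : ℝ × ℝ → ℝ :=
  fun p => if i = 0 then deriv (fun t => f (t, p.2)) p.1
           else deriv (fun t => f (p.1, t)) p.2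

/-- Affine Hessian H(f)_{ij} = ∂_i∂_j f − Σ_k Γ_{ij}^k ∂_k f. -/
noncomputable def Hess (Γ : Fin 2 → Fin 2 → Fin 2 → (ℝ × ℝ → ℝ))
    (f : ℝ × ℝ → ℝ) (i j : Fin 2) : ℝ × ℝ → ℝ :=
  fun p => pd i (pd j f) p - ∑ k, Γ i j k p * pd k f p

/-- Ricci tensor ρ_{jk} = ∂_i Γ_{jk}^i − ∂_j Γ_{ik}^i + Γ_{il}^i Γ_{jk}^l − Γ_{jl}^i Γ_{ik}^l. -/
noncomputable def Ric (Γ : Fin 2 → Fin 2 → Fin 2 → (ℝ × ℝ → ℝ)) (j k : Fin 2) :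
    ℝ × ℝ → ℝ :=
  fun p => (∑ i, pd i (Γ j k i) p) - (∑ i, pd j (Γ i k i) p)
    + (∑ i, ∑ l, Γ i l i p * Γ j k l p) - (∑ i, ∑ l, Γ j l i p * Γ i k l p)

/-- Symmetrized Ricci tensor. -/
noncomputable def RicS (Γ : Fin 2 → Fin 2 → Fin 2 → (ℝ × ℝ → ℝ)) (i j : Fin 2) :
    ℝ × ℝ → ℝ :=
  fun p => (Ric Γ i j p + Ric Γ j i p) / 2

/-- Covariant derivative of the Ricci tensor: (∇ρ)(i,j;k). -/
noncomputable def nabRic (Γ : Fin 2 → Fin 2 → Fin 2 → (ℝ × ℝ → ℝ)) (i j k : Fin 2) :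
    ℝ × ℝ → ℝ :=
  fun p => pd k (Ric Γ i j) p - ∑ l, Γ k i l p * Ric Γ l j p
    - ∑ l, Γ k j l p * Ric Γ i l p

/-- Type B Christoffel symbols Γ_{ij}^k = C_{ij}^k / x¹. -/
noncomputable def ΓB (C : Fin 2 → Fin 2 → Fin 2 → ℝ) :
    Fin 2 → Fin 2 → Fin 2 → (ℝ × ℝ → ℝ) :=
  fun i j k p => C i j k / p.1


lemma pd_const' (i : Fin 2) (c : ℝ) (p : ℝ × ℝ) : pd i (fun _ => c) p = 0 := by
  fin_cases i <;> simp [pd]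

lemma pd0_rpow (α : ℝ) (p : ℝ × ℝ) (hp : p.1 ≠ 0) :
    pd 0 (fun q : ℝ × ℝ => q.1 ^ α) p = α * p.1 ^ (α - 1) := by
  simp only [pd, if_pos rfl]
  exact (Real.hasDerivAt_rpow_const (Or.inl hp)).deriv

lemma pd1_rpow (α : ℝ) : pd 1 (fun q : ℝ × ℝ => q.1 ^ α) = fun _ => 0 := by
  funext p
  simp [pd]

lemma pd00_rpow (α : ℝ) (p : ℝ × ℝ) (hp : 0 < p.1) :
    pd 0 (pd 0 (fun q : ℝ × ℝ => q.1 ^ α)) p = α * (α - 1) * p.1 ^ (α - 2) := by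
  have key : pd 0 (fun q : ℝ × ℝ => q.1 ^ α)
      = fun q : ℝ × ℝ => deriv (fun s : ℝ => s ^ α) q.1 := by
    funext q; simp [pd]
  rw [key]
  have e0 : pd 0 (fun q : ℝ × ℝ => deriv (fun s : ℝ => s ^ α) q.1) p
      = deriv (fun t : ℝ => deriv (fun s : ℝ => s ^ α) t) p.1 := by
    simp [pd]
  rw [e0]
  have h1 : (fun t : ℝ => deriv (fun s : ℝ => s ^ α) t)
      =ᶠ[nhds p.1] (fun t => α * t ^ (α - 1)) := by
    filter_upwards [eventually_ne_nhds hp.ne'] with t ht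
    exact (Real.hasDerivAt_rpow_const (Or.inl ht)).deriv
  rw [h1.deriv_eq, ((Real.hasDerivAt_rpow_const (Or.inl hp.ne')).const_mul α).deriv,
    show α - 1 - 1 = α - 2 by ring]
  ring

lemma pd10_rpow (α : ℝ) (p : ℝ × ℝ) :
    pd 1 (pd 0 (fun q : ℝ × ℝ => q.1 ^ α)) p = 0 := by
  simp [pd]

lemma GB_apply (C : Fin 2 → Fin 2 → Fin 2 → ℝ) (i j k : Fin 2) (p : ℝ × ℝ) :
    ΓB C i j k p = C i j k / p.1 := rfl

lemma pd0_GB (C : Fin 2 → Fin 2 → Fin 2 → ℝ) (i j k : Fin 2) (p : ℝ × ℝ) (hp : p.1 ≠ 0) :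
    pd 0 (ΓB C i j k) p = -(C i j k) / p.1 ^ 2 := by
  have e0 : pd 0 (ΓB C i j k) p = deriv (fun t : ℝ => C i j k * t⁻¹) p.1 := by
    simp [pd, ΓB, div_eq_mul_inv]
  rw [e0, ((hasDerivAt_inv hp).const_mul (C i j k)).deriv]
  ring

lemma pd1_GB (C : Fin 2 → Fin 2 → Fin 2 → ℝ) (i j k : Fin 2) (p : ℝ × ℝ) :
    pd 1 (ΓB C i j k) p = 0 := by
  simp [pd, ΓB]

set_option maxHeartbeats 2000000 in
/-- Type B with C₂₂¹ = ε, C₁₂¹ = 0, C₂₂² = 2εC₁₁², C₁₁¹ = 1 + 2C₁₂² + ε(C₁₁²)²: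
f = (x¹)^α with α = C₁₁¹ − C₁₂² − 1 lies in E(−1,∇). -/
theorem typeB_eigenvalue_neg_one_case2
    (C : Fin 2 → Fin 2 → Fin 2 → ℝ)
    (hsym : ∀ i j k, C i j k = C j i k)
    (ε : ℝ) (hε : ε = 1 ∨ ε = -1)
    (h1 : C 1 1 0 = ε) (h2 : C 0 1 0 = 0)
    (h3 : C 1 1 1 = 2 * ε * C 0 0 1)
    (h4 : C 0 0 0 = 1 + 2 * C 0 1 1 + ε * (C 0 0 1) ^ 2) :
    ∀ i j : Fin 2, ∀ p : ℝ × ℝ, 0 < p.1 →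
      Hess (ΓB C) (fun q => q.1 ^ (C 0 0 0 - C 0 1 1 - 1)) i j p
        = - (p.1 ^ (C 0 0 0 - C 0 1 1 - 1)) * RicS (ΓB C) i j p := by
  intro i j p hx
  have hx0 : p.1 ≠ 0 := ne_of_gt hx
  have s1 : C 1 0 0 = C 0 1 0 := hsym 1 0 0
  have s2 : C 1 0 1 = C 0 1 1 := hsym 1 0 1
  have e1 : p.1 ^ (C 0 0 0 - C 0 1 1 - 1 - 1) = p.1 ^ (C 0 0 0 - C 0 1 1 - 1) / p.1 := by
    rw [Real.rpow_sub hx, Real.rpow_one]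
  have e2 : p.1 ^ (C 0 0 0 - C 0 1 1 - 1 - 2) = p.1 ^ (C 0 0 0 - C 0 1 1 - 1) / p.1 / p.1 := by
    rw [show C 0 0 0 - C 0 1 1 - 1 - 2 = C 0 0 0 - C 0 1 1 - 1 - 1 - 1 by ring,
      Real.rpow_sub hx, Real.rpow_sub hx, Real.rpow_one]
  fin_cases i <;> fin_cases j <;>
  · simp only [Fin.mk_zero, Fin.mk_one, Hess, RicS, Ric, Fin.sum_univ_two, GB_apply,
      pd0_rpow _ p hx0, pd1_rpow, pd00_rpow _ p hx, pd10_rpow, pd_const',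
      pd0_GB C _ _ _ p hx0, pd1_GB, e1, e2]
    simp only [s1, s2, h1, h2, h3, h4]
    rcases hε with h | h <;> subst h <;> field_simp <;> ring
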